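/- arXiv:1711.02842 — 5 statements merged into one kernel-verified Lean document; each statement's English description precedes it below -/
import Mathlib

section
/- Let S be a k-dimensional linear subspace of R^n. Then the number of vertices of the hypercube {-1,1}^n contained in S is at most 2^k. -/
/-- (Odlyzko) Any `k`-dimensional linear subspace of `ℝ^n` contains at most `2^k`
vertices of the hypercube `{-1,1}^n`. -/
theorem cube_inter_subspace_card_le (n k : ℕ) (S : Submodule ℝ (Fin n → ℝ))
    (hS : Module.finrank ℝ S = k) :
    {x : Fin n → ℝ | (∀ i, x i = 1 ∨ x i = -1) ∧ x ∈ S}.ncard ≤ 2 ^ k := by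
  classical
  -- coordinate functionals restricted to S
  set φ : Fin n → Module.Dual ℝ S := fun i => (LinearMap.proj i).comp S.subtype with hφ
  have hco : (Submodule.span ℝ (Set.range φ)).dualCoannihilator = ⊥ := by
    rw [eq_bot_iff]
    intro s hs
    have : ∀ i, φ i s = 0 := fun i =>
      (Submodule.mem_dualCoannihilator s).mp hs _ (Submodule.subset_span ⟨i, rfl⟩)
    have : (s : Fin n → ℝ) = 0 := funext fun i => this i
    simpa [Submodule.mem_bot] using Subtype.ext this
  -- extract a linearly independent subset spanning the same span
  obtain ⟨b, hbsub, hbspan, hbli⟩ := exists_linearIndependent ℝ (Set.range φ)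
  have hbfin : b.Finite := hbli.setFinite
  haveI := hbfin.fintype
  have hbcard : Fintype.card b ≤ k := by
    have := hbli.fintype_card_le_finrank
    rwa [Subspace.dual_finrank_eq, hS] at this
  -- coannihilator of span b is trivial
  have hcob : (Submodule.span ℝ b).dualCoannihilator = ⊥ := by rw [hbspan]; exact hco
  -- choose coordinates for elements of b
  have hc : ∀ f ∈ b, ∃ i : Fin n, φ i = f := fun f hf => hbsub hf
  choose c hc using hc
  -- the injection into b → Bool
  set T : Set (Fin n → ℝ) := {x : Fin n → ℝ | (∀ i, x i = 1 ∨ x i = -1) ∧ x ∈ S} with hT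
  have key : ∀ x ∈ T, ∀ y ∈ T, (∀ f : b, x (c f f.2) = y (c f f.2)) → x = y := by
    rintro x ⟨hx1, hx2⟩ y ⟨hy1, hy2⟩ h
    have hmem : (⟨x, hx2⟩ - ⟨y, hy2⟩ : S) ∈ (Submodule.span ℝ b).dualCoannihilator := by
      rw [Submodule.mem_dualCoannihilator]
      intro f hf
      refine Submodule.span_induction (fun g hg => ?_) (by simp)
        (fun g g' _ _ hg hg' => by simp [hg, hg'])
        (fun a g _ hg => by simp [hg]) hf
      have := hc g hg
      have h2 := h ⟨g, hg⟩
      rw [← this]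
      simp [φ, h2]
    rw [hcob, Submodule.mem_bot, sub_eq_zero] at hmem
    exact congrArg Subtype.val hmem
  -- count
  have hfin : (Set.univ : Set (b → Bool)).Finite := Set.finite_univ
  have hle : T.ncard ≤ (Set.univ : Set (b → Bool)).ncard := by
    apply Set.ncard_le_ncard_of_injOn (fun x (f : b) => decide (x (c f f.2) = 1))
      (fun x _ => Set.mem_univ _) _ hfin
    intro x hx y hy hxy
    refine key x hx y hy fun f => ?_
    have hx1 := hx.1 (c f f.2)
    have hy1 := hy.1 (c f f.2)
    have := congrFun hxy f
    simp only [decide_eq_decide] at this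
    rcases hx1 with h1 | h1 <;> rcases hy1 with h2 | h2 <;> simp_all
  refine hle.trans ?_
  rw [Set.ncard_univ, Nat.card_eq_fintype_card, Fintype.card_fun, Fintype.card_bool]
  exact Nat.pow_le_pow_right (by norm_num) hbcard
end

section
/- Let M be a fixed k×m matrix with entries ±1 of rank r > 0, let c be a fixed integer vector of length k, and let x be a random vector uniformly distributed on {-1,1}^m. Then P(Mx = c) ≤ 2^{-r}. -/
open Matrix


/-- Let `M` be a fixed `k × m` matrix with entries `±1` of rank `r > 0`, let `c` be a fixed
integer vector, and let `x` be uniform on `{-1,1}^m`. Then `P(Mx = c) ≤ 2^{-r}`,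
i.e. the number of `±1` vectors `x` with `Mx = c`, times `2^r`, is at most `2^m`
(the total number of `±1` vectors). -/
theorem prob_mulVec_eq_le (k m r : ℕ) (M : Matrix (Fin k) (Fin m) ℝ)
    (hM : ∀ i j, M i j = 1 ∨ M i j = -1) (hr : M.rank = r) (hr0 : 0 < r)
    (c : Fin k → ℤ) :
    {x : Fin m → ℝ | (∀ i, x i = 1 ∨ x i = -1) ∧
        M.mulVec x = fun i => (c i : ℝ)}.ncard * 2 ^ r ≤ 2 ^ m := by
  classical
  set col : Fin m → (Fin k → ℝ) := fun j i => M i j with hcoldef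
  have hrange : Set.range col = Set.range Mᵀ := rfl
  -- extract a linearly independent spanning subset of the columns
  obtain ⟨t, hts, hspan, hli⟩ := exists_linearIndependent ℝ (Set.range col)
  have htfin : t.Finite := (Set.finite_range col).subset hts
  haveI : Fintype t := htfin.fintype
  have hcardt : Fintype.card t = r := by
    have h1 := finrank_span_set_eq_card hli
    rw [hspan, show Set.range col = Set.range M.col from rfl, ← Matrix.rank_eq_finrank_span_cols] at h1
    rw [← hr, h1, Set.toFinset_card]
  -- choose indices for the independent columns
  have hsec : ∀ v : t, ∃ j : Fin m, col j = (v : Fin k → ℝ) := fun v => hts v.2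
  choose f hf using hsec
  have hfi : Function.Injective f := by
    intro a b hab
    apply Subtype.ext
    rw [← hf a, ← hf b, hab]
  set s : Finset (Fin m) := Finset.univ.image f with hsdef
  have hscard : s.card = r := by
    rw [hsdef, Finset.card_image_of_injective _ hfi, Finset.card_univ, hcardt]
  -- the columns indexed by s are linearly independent
  have hbij : Function.Bijective (fun v : t => (⟨f v, by
      simp [hsdef]⟩ : {j // j ∈ s})) := by
    constructor
    · intro a b hab
      exact hfi (congrArg Subtype.val hab)
    · rintro ⟨j, hj⟩
      rw [hsdef, Finset.mem_image] at hj
      obtain ⟨v, _, hv⟩ := hj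
      exact ⟨v, Subtype.ext hv⟩
  have hlis : LinearIndependent ℝ (fun j : {j // j ∈ s} => col (j : Fin m)) := by
    rw [← linearIndependent_equiv (Equiv.ofBijective _ hbij)]
    have : (fun j : {j // j ∈ s} => col (j : Fin m)) ∘ (Equiv.ofBijective _ hbij)
        = fun v : t => (v : Fin k → ℝ) := by
      funext v
      simp [Equiv.ofBijective, hf v]
    rw [this]
    exact hli
  -- the solution set
  set S : Set (Fin m → ℝ) := {x : Fin m → ℝ | (∀ i, x i = 1 ∨ x i = -1) ∧
        M.mulVec x = fun i => (c i : ℝ)} with hSdef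
  -- injection of S into boolean functions on sᶜ
  have hinj : Set.InjOn (fun (x : Fin m → ℝ) (j : {j // j ∈ sᶜ}) => decide (x (j : Fin m) = 1))
      S := by
    intro x hx y hy hxy
    have hval : ∀ j : Fin m, j ∉ s → x j = y j := by
      intro j hj
      have := congrFun hxy ⟨j, Finset.mem_compl.2 hj⟩
      simp only [decide_eq_decide] at this
      rcases hx.1 j with h1 | h1 <;> rcases hy.1 j with h2 | h2 <;>
        simp [h1, h2] at this ⊢ <;> norm_num [h1, h2] at this
    -- the difference is supported on s, and kills the independent columns
    have hsum : ∑ j : {j // j ∈ s}, (x (j : Fin m) - y (j : Fin m)) • col (j : Fin m) = 0 := by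
      funext i
      have h0 : M.mulVec x i - M.mulVec y i = 0 := by
        rw [hx.2, hy.2]; ring
      simp only [Matrix.mulVec, dotProduct] at h0
      rw [← Finset.sum_sub_distrib] at h0
      have hext : ∑ j ∈ s, (x j - y j) * M i j = ∑ j : Fin m, (x j - y j) * M i j := by
        apply Finset.sum_subset (Finset.subset_univ s)
        intro j _ hj
        rw [hval j hj]; ring
      calc (∑ j : {j // j ∈ s}, (x (j : Fin m) - y (j : Fin m)) • col (j : Fin m)) i
          = ∑ j ∈ s, (x j - y j) * M i j := by
            rw [Finset.sum_apply]
            rw [← Finset.sum_coe_sort s (fun j => (x j - y j) * M i j)]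
            simp [hcoldef, mul_comm]
        _ = ∑ j : Fin m, (x j - y j) * M i j := hext
        _ = 0 := by
            rw [← h0]
            apply Finset.sum_congr rfl
            intro j _
            ring
    have hzero := Fintype.linearIndependent_iff.mp hlis
      (fun j : {j // j ∈ s} => x (j : Fin m) - y (j : Fin m)) hsum
    funext j
    by_cases hj : j ∈ s
    · have := hzero ⟨j, hj⟩
      have h2 : x j - y j = 0 := this
      linarith
    · exact hval j hj
  -- count
  have hcount : S.ncard ≤ 2 ^ (m - r) := by
    have := Set.ncard_le_ncard_of_injOn _ (fun x _ => Set.mem_univ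
        (fun j : {j // j ∈ sᶜ} => decide (x (j : Fin m) = 1))) hinj (Set.finite_univ)
    rw [Set.ncard_univ, Nat.card_eq_fintype_card, Fintype.card_fun, Fintype.card_bool,
      Fintype.card_coe, Finset.card_compl, hscard, Fintype.card_fin] at this
    exact this
  have hrm : r ≤ m := by
    rw [← hr]
    exact (M.rank_le_card_width).trans (Fintype.card_fin m).le
  calc S.ncard * 2 ^ r ≤ 2 ^ (m - r) * 2 ^ r := Nat.mul_le_mul_right _ hcount
    _ = 2 ^ m := by rw [← pow_add, Nat.sub_add_cancel hrm]
end

section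
/- For any k-dimensional linear subspace S of R^m with k < m, the probability that a uniformly random vector x in {-1,1}^m lies in S is at most 2^{k-m}. -/
/-- For a `k`-dimensional subspace `S` of `ℝ^m` with `k < m`, the probability that a uniform
random `±1` vector lies in `S` is at most `2^{k-m}`: equivalently, the number of cube
vertices in `S`, times `2^{m-k}`, is at most `2^m` (the size of the sample space). -/
theorem prob_cube_mem_subspace_le (m k : ℕ) (hk : k < m) (S : Submodule ℝ (Fin m → ℝ))
    (hS : Module.finrank ℝ S = k) :
    {x : Fin m → ℝ | (∀ i, x i = 1 ∨ x i = -1) ∧ x ∈ S}.ncard * 2 ^ (m - k) ≤ 2 ^ m := by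
  classical
  -- coordinate functionals restricted to S
  set f : Fin m → Module.Dual ℝ S := fun i => (LinearMap.proj i).comp S.subtype with hf
  obtain ⟨b, hbsub, hbspan, hbind⟩ := exists_linearIndependent ℝ (Set.range f)
  have hSfin : FiniteDimensional ℝ S := FiniteDimensional.finiteDimensional_submodule S
  have hbfin : b.Finite := hbind.setFinite
  haveI : Fintype b := hbfin.fintype
  -- choose an index for each functional in b
  have hg : ∀ φ : b, ∃ i : Fin m, f i = (φ : Module.Dual ℝ S) := fun φ => hbsub φ.2
  choose g hgspec using hg
  -- the injection into Bool^b
  set T : {x : Fin m → ℝ | (∀ i, x i = 1 ∨ x i = -1) ∧ x ∈ S} → (b → Bool) :=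
    fun x φ => decide ((x : Fin m → ℝ) (g φ) = 1) with hT
  have hTinj : Function.Injective T := by
    intro x y hxy
    have key : ∀ φ : b, (φ : Module.Dual ℝ S)
        (⟨(x : Fin m → ℝ), x.2.2⟩ - ⟨(y : Fin m → ℝ), y.2.2⟩ : S) = 0 := by
      intro φ
      have hx := x.2.1 (g φ)
      have hy := y.2.1 (g φ)
      have h := congrFun hxy φ
      simp only [hT, decide_eq_decide] at h
      have hxyg : (x : Fin m → ℝ) (g φ) = (y : Fin m → ℝ) (g φ) := by
        rcases hx with hx | hx <;> rcases hy with hy | hy <;>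
          simp [hx, hy] at h ⊢ <;> norm_num [hx, hy] at h
      have : f (g φ) (⟨(x : Fin m → ℝ), x.2.2⟩ - ⟨(y : Fin m → ℝ), y.2.2⟩ : S) = 0 := by
        simp [hf, hxyg]
      rwa [hgspec] at this
    -- functionals in b vanish on z, hence all coordinate functionals do
    set z : S := (⟨(x : Fin m → ℝ), x.2.2⟩ - ⟨(y : Fin m → ℝ), y.2.2⟩ : S) with hz
    have hker : b ⊆ (LinearMap.ker (Module.Dual.eval ℝ S z) : Set (Module.Dual ℝ S)) := by
      intro φ hφ
      simpa [LinearMap.mem_ker] using key ⟨φ, hφ⟩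
    have hspanker : Submodule.span ℝ b ≤ LinearMap.ker (Module.Dual.eval ℝ S z) :=
      Submodule.span_le.mpr hker
    have hall : ∀ i : Fin m, f i z = 0 := by
      intro i
      have : f i ∈ Submodule.span ℝ (Set.range f) := Submodule.subset_span ⟨i, rfl⟩
      rw [← hbspan] at this
      have := hspanker this
      simpa [LinearMap.mem_ker] using this
    have hz0 : z = 0 := by
      have : (z : Fin m → ℝ) = 0 := by
        funext i
        simpa [hf] using hall i
      exact Subtype.ext this
    have : ((x : Fin m → ℝ)) = ((y : Fin m → ℝ)) := by
      have := sub_eq_zero.mp (congrArg (Subtype.val) hz0)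
      simpa using this
    exact Subtype.ext this
  -- cardinality of b is at most k
  have hbcard : hbfin.toFinset.card ≤ k := by
    have h1 : Module.finrank ℝ (Submodule.span ℝ b) = hbfin.toFinset.card := by
      rw [finrank_span_set_eq_card hbind, Set.Finite.card_toFinset hbfin, Set.toFinset_card]
    have h2 : Module.finrank ℝ (Submodule.span ℝ b) ≤ Module.finrank ℝ (Module.Dual ℝ S) :=
      Submodule.finrank_le _
    rw [h1, Subspace.dual_finrank_eq, hS] at h2
    exact h2
  -- count
  have hcount : {x : Fin m → ℝ | (∀ i, x i = 1 ∨ x i = -1) ∧ x ∈ S}.ncard ≤ 2 ^ k := by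
    have := Nat.card_le_card_of_injective T hTinj
    rw [Nat.card_coe_set_eq] at this
    have hcard : Nat.card (↑b → Bool) = 2 ^ hbfin.toFinset.card := by
      rw [Nat.card_eq_fintype_card, Fintype.card_fun, Set.Finite.card_toFinset hbfin]
      simp
    calc {x : Fin m → ℝ | (∀ i, x i = 1 ∨ x i = -1) ∧ x ∈ S}.ncard
        ≤ Nat.card (↑b → Bool) := this
      _ = 2 ^ hbfin.toFinset.card := hcard
      _ ≤ 2 ^ k := Nat.pow_le_pow_right (by norm_num) hbcard
  have hpow : 2 ^ k * 2 ^ (m - k) = 2 ^ m := by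
    rw [← pow_add, Nat.add_sub_cancel' hk.le]
  have h1 := mul_le_mul_left hcount (2 ^ (m - k))
  rw [hpow] at h1
  exact h1
end

section
/- Let M be a 2m × q real matrix. Say M has property P if for every 1 ≤ i ≤ m, deleting both the i-th row and the (m+i)-th row decreases the rank of M by at least one. If M has property P and rank k, then k ≥ m. -/
open Matrix

/-- A `2m × q` matrix (rows indexed by `Fin m ⊕ Fin m`, row `i` and row `m+i` being
`Sum.inl i` and `Sum.inr i`) has property `P` if deleting rows `i` and `m+i` decreases
its rank by at least one, for every `i`. -/
def HasPropertyP {m q : ℕ} (M : Matrix (Fin m ⊕ Fin m) (Fin q) ℝ) : Prop :=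
  ∀ i : Fin m,
    (M.submatrix
        (fun r : {r : Fin m ⊕ Fin m // r ≠ Sum.inl i ∧ r ≠ Sum.inr i} =>
          (r : Fin m ⊕ Fin m)) id).rank + 1 ≤ M.rank

/-- If a `2m × q` matrix has property `P` and rank `k`, then `k ≥ m`. -/
theorem propertyP_rank_ge (m q k : ℕ) (hm : 1 ≤ m) (M : Matrix (Fin m ⊕ Fin m) (Fin q) ℝ)
    (hP : HasPropertyP M) (hk : M.rank = k) : m ≤ k := by
  classical
  -- Row-space characterization of the ranks.
  have hMrank : M.rank = Module.finrank ℝ (Submodule.span ℝ (Set.range M)) :=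
    Matrix.rank_eq_finrank_span_row M
  -- For each i, the span of the rows outside the pair i.
  set W : Fin m → Submodule ℝ (Fin q → ℝ) := fun i =>
    Submodule.span ℝ (M '' {r | r ≠ Sum.inl i ∧ r ≠ Sum.inr i}) with hW
  have hWlt : ∀ i, Module.finrank ℝ (W i) < k := by
    intro i
    have h := hP i
    have hsub : (M.submatrix
        (fun r : {r : Fin m ⊕ Fin m // r ≠ Sum.inl i ∧ r ≠ Sum.inr i} =>
          (r : Fin m ⊕ Fin m)) id).rank = Module.finrank ℝ (W i) := by
      rw [Matrix.rank_eq_finrank_span_row]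
      have hset : Set.range (M.submatrix
          (fun r : {r : Fin m ⊕ Fin m // r ≠ Sum.inl i ∧ r ≠ Sum.inr i} =>
            (r : Fin m ⊕ Fin m)) id) = M '' {r | r ≠ Sum.inl i ∧ r ≠ Sum.inr i} := by
        ext v
        constructor
        · rintro ⟨r, rfl⟩
          exact ⟨r.1, r.2, rfl⟩
        · rintro ⟨r, hr, rfl⟩
          exact ⟨⟨r, hr⟩, rfl⟩
      exact congrArg (fun S => Module.finrank ℝ (Submodule.span ℝ S)) hset
    omega
  -- Extract a linearly independent spanning subset of the rows.
  obtain ⟨s, hs_sub, hs_span, hs_li⟩ := exists_linearIndependent ℝ (Set.range M)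
  have hs_fin : s.Finite := (Set.finite_range M).subset hs_sub
  haveI : Fintype s := hs_fin.fintype
  have hcard : Fintype.card s = k := by
    have := finrank_span_set_eq_card hs_li
    rw [hs_span] at this
    rw [← Set.toFinset_card, ← this, ← hMrank, hk]
  -- For each i, pick a vector in s that is not in W i.
  have hex : ∀ i : Fin m, ∃ v ∈ s, v ∉ W i := by
    intro i
    by_contra h
    push_neg at h
    have hle : Submodule.span ℝ (Set.range M) ≤ W i := by
      rw [← hs_span]
      exact Submodule.span_le.mpr h
    have := Submodule.finrank_mono hle
    rw [← hMrank, hk] at this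
    exact absurd this (not_le.mpr (hWlt i))
  choose v hv hvW using hex
  -- The chosen vectors are distinct, giving an injection Fin m → s.
  have hinj : Function.Injective v := by
    intro i j hij
    by_contra hne
    -- v i ∈ range M, so v i = M r for some r
    obtain ⟨r, hr⟩ := hs_sub (hv i)
    -- r is in pair i or not
    by_cases hri : r ≠ Sum.inl i ∧ r ≠ Sum.inr i
    · exact hvW i (Submodule.subset_span ⟨r, hri, hr⟩)
    · -- r ∈ pair i, so r ∉ pair j
      have hrj : r ≠ Sum.inl j ∧ r ≠ Sum.inr j := by
        rcases not_and_or.mp hri with h1 | h1 <;>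
        · push_neg at h1
          subst h1
          exact ⟨by simp [hne], by simp [hne]⟩
      exact hvW j (hij ▸ Submodule.subset_span ⟨r, hrj, hr⟩)
  have : Fintype.card (Fin m) ≤ Fintype.card s := by
    exact Fintype.card_le_of_injective (fun i => ⟨v i, hv i⟩)
      (fun i j h => hinj (Subtype.ext_iff.mp h))
  simpa [hcard] using this
end

section
/- Let M be a 2m × q matrix of rank k with property P. Then there is a permutation of the rows of M, obtained by composing operations of the two types (swap rows i and m+i; or swap rows i,j and simultaneously rows m+i, m+j for i,j ≤ m), after which the first k rows of the resulting matrix are linearly independent, and the resulting matrix still has property P. -/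
open Matrix

/-- The allowed row operations: swap rows `i ↔ m+i`, or simultaneously swap rows
`i ↔ j` and `m+i ↔ m+j`. -/
def AllowedSwaps (m : ℕ) : Set (Equiv.Perm (Fin m ⊕ Fin m)) :=
  {σ | ∃ i : Fin m, σ = Equiv.swap (Sum.inl i) (Sum.inr i)} ∪
    {σ | ∃ i j : Fin m, i ≠ j ∧
      σ = (Equiv.swap (Sum.inl i) (Sum.inl j)).trans (Equiv.swap (Sum.inr i) (Sum.inr j))}

lemma range_submatrix_row {R : Type*} {l o n' : Type*} (A : Matrix l n' R) (e : o ≃ l) :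
    Set.range (A.submatrix e id) = Set.range A := by
  have h : (A.submatrix e id : Matrix o n' R) = A ∘ e := rfl
  rw [h]; exact e.surjective.range_comp _

lemma rank_submatrix_row_equiv {R : Type*} [Field R] {l o n' : Type*} [Fintype l] [Fintype o]
    [Fintype n'] (A : Matrix l n' R) (e : o ≃ l) :
    (A.submatrix e id).rank = A.rank := by
  rw [rank_eq_finrank_span_row, rank_eq_finrank_span_row, Matrix.row, Matrix.row, range_submatrix_row]

/-- The "pair flip" permutation that swaps `Sum.inl a ↔ Sum.inr a` for every `a ∈ F`. -/
def pairFlip {m : ℕ} (F : Finset (Fin m)) : Equiv.Perm (Fin m ⊕ Fin m) where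
  toFun := Sum.elim (fun a => if a ∈ F then Sum.inr a else Sum.inl a)
    (fun a => if a ∈ F then Sum.inl a else Sum.inr a)
  invFun := Sum.elim (fun a => if a ∈ F then Sum.inr a else Sum.inl a)
    (fun a => if a ∈ F then Sum.inl a else Sum.inr a)
  left_inv := by rintro (a | a) <;> by_cases h : a ∈ F <;> simp [h]
  right_inv := by rintro (a | a) <;> by_cases h : a ∈ F <;> simp [h]

@[simp] lemma pairFlip_inl {m : ℕ} (F : Finset (Fin m)) (a : Fin m) :
    pairFlip F (Sum.inl a) = if a ∈ F then Sum.inr a else Sum.inl a := rfl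

@[simp] lemma pairFlip_inr {m : ℕ} (F : Finset (Fin m)) (a : Fin m) :
    pairFlip F (Sum.inr a) = if a ∈ F then Sum.inl a else Sum.inr a := rfl

lemma pairFlip_mem {m : ℕ} (F : Finset (Fin m)) :
    pairFlip F ∈ Subgroup.closure (AllowedSwaps m) := by
  classical
  induction F using Finset.induction with
  | empty =>
    have h : pairFlip (∅ : Finset (Fin m)) = 1 := by
      ext x; rcases x with a | a <;> simp
    rw [h]; exact one_mem _
  | @insert a F ha ih =>
    have h : pairFlip (insert a F) = Equiv.swap (Sum.inl a) (Sum.inr a) * pairFlip F := by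
      ext x
      rcases x with b | b <;> by_cases hb : b = a
      · subst hb
        simp [Equiv.Perm.mul_apply, ha]
      · simp only [Equiv.Perm.mul_apply, pairFlip_inl, Finset.mem_insert, hb, false_or]
        by_cases hbF : b ∈ F <;>
          simp [hbF, Equiv.swap_apply_of_ne_of_ne, hb, Sum.inl_injective.ne hb,
            Sum.inr_injective.ne hb]
      · subst hb
        simp [Equiv.Perm.mul_apply, ha]
      · simp only [Equiv.Perm.mul_apply, pairFlip_inr, Finset.mem_insert, hb, false_or]
        by_cases hbF : b ∈ F <;>
          simp [hbF, Equiv.swap_apply_of_ne_of_ne, hb, Sum.inl_injective.ne hb,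
            Sum.inr_injective.ne hb]
    rw [h]
    exact mul_mem (Subgroup.subset_closure (Or.inl ⟨a, rfl⟩)) ih

lemma sumCongr_swap {m : ℕ} (x y : Fin m) :
    Equiv.sumCongr (Equiv.swap x y) (Equiv.swap x y) =
      (Equiv.swap (Sum.inl x) (Sum.inl y)).trans (Equiv.swap (Sum.inr x) (Sum.inr y)) := by
  ext r
  rcases r with a | a <;>
    simp [Equiv.swap_apply_def] <;> split_ifs <;> simp_all

lemma sumCongr_mem {m : ℕ} (ρ : Equiv.Perm (Fin m)) :
    Equiv.sumCongr ρ ρ ∈ Subgroup.closure (AllowedSwaps m) := by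
  induction ρ using Equiv.Perm.swap_induction_on
  next =>
    have h : Equiv.sumCongr (1 : Equiv.Perm (Fin m)) (1 : Equiv.Perm (Fin m)) = 1 := by
      ext r; rcases r with a | a <;> rfl
    rw [h]; exact one_mem _
  next f x y hxy ih =>
    have h : Equiv.sumCongr (Equiv.swap x y * f) (Equiv.swap x y * f) =
        Equiv.sumCongr (Equiv.swap x y) (Equiv.swap x y) * Equiv.sumCongr f f := by
      ext r; rcases r with a | a <;> rfl
    rw [h]
    exact mul_mem (Subgroup.subset_closure (Or.inr ⟨x, y, hxy, sumCongr_swap x y⟩)) ih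

lemma hasPropertyP_submatrix {m q : ℕ} (M : Matrix (Fin m ⊕ Fin m) (Fin q) ℝ)
    (σ : Equiv.Perm (Fin m ⊕ Fin m)) (π : Equiv.Perm (Fin m))
    (hσ : ∀ i, (σ (Sum.inl i) = Sum.inl (π i) ∧ σ (Sum.inr i) = Sum.inr (π i)) ∨
               (σ (Sum.inl i) = Sum.inr (π i) ∧ σ (Sum.inr i) = Sum.inl (π i)))
    (hP : HasPropertyP M) : HasPropertyP (M.submatrix σ id) := by
  intro i
  have key : ∀ r : Fin m ⊕ Fin m,
      (σ r = Sum.inl (π i) ∨ σ r = Sum.inr (π i)) ↔ (r = Sum.inl i ∨ r = Sum.inr i) := by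
    intro r
    rcases hσ i with ⟨h1, h2⟩ | ⟨h1, h2⟩
    · constructor
      · rintro (h | h)
        · exact Or.inl (σ.injective (h.trans h1.symm))
        · exact Or.inr (σ.injective (h.trans h2.symm))
      · rintro (h | h) <;> subst h <;> simp [h1, h2]
    · constructor
      · rintro (h | h)
        · exact Or.inr (σ.injective (h.trans h2.symm))
        · exact Or.inl (σ.injective (h.trans h1.symm))
      · rintro (h | h) <;> subst h <;> simp [h1, h2]
  let e : {r : Fin m ⊕ Fin m // r ≠ Sum.inl i ∧ r ≠ Sum.inr i} ≃
      {r : Fin m ⊕ Fin m // r ≠ Sum.inl (π i) ∧ r ≠ Sum.inr (π i)} :=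
    σ.subtypeEquiv (fun r => by
      rw [← not_or, ← not_or]
      exact not_congr (key r).symm)
  have hEq : ((M.submatrix σ id).submatrix
      (fun r : {r : Fin m ⊕ Fin m // r ≠ Sum.inl i ∧ r ≠ Sum.inr i} =>
        (r : Fin m ⊕ Fin m)) id)
      = (M.submatrix
          (fun r : {r : Fin m ⊕ Fin m // r ≠ Sum.inl (π i) ∧ r ≠ Sum.inr (π i)} =>
            (r : Fin m ⊕ Fin m)) id).submatrix e id := by
    ext r j
    simp [e, Equiv.subtypeEquiv, Matrix.submatrix_apply]
  rw [hEq, rank_submatrix_row_equiv M σ, rank_submatrix_row_equiv]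
  exact hP (π i)

/-- If a `2m × q` matrix of rank `k` has property `P`, then some composition of the allowed
row operations turns it into a matrix which still has property `P` and whose first `k` rows
(under the identification `Fin m ⊕ Fin m ≃ Fin (m + m)`) are linearly independent. -/
theorem propertyP_reduce_to_independent_first_rows (m q k : ℕ)
    (M : Matrix (Fin m ⊕ Fin m) (Fin q) ℝ) (hP : HasPropertyP M) (hk : M.rank = k) :
    ∃ σ ∈ Subgroup.closure (AllowedSwaps m),
      HasPropertyP (M.submatrix σ id) ∧
      LinearIndependent ℝ
        (fun r : {r : Fin (m + m) // (r : ℕ) < k} =>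
          (M.submatrix σ id) (finSumFinEquiv.symm r.val)) := by
  classical
  obtain ⟨I, hI, hImax⟩ := exists_maximal_linearIndepOn ℝ (fun r : Fin m ⊕ Fin m => M r)
  have hspan : Submodule.span ℝ (M '' I) = Submodule.span ℝ (Set.range M) := by
    refine le_antisymm (Submodule.span_mono (Set.image_subset_range _ _)) ?_
    rw [Submodule.span_le]
    rintro v ⟨r, rfl⟩
    by_cases hr : r ∈ I
    · exact Submodule.subset_span (Set.mem_image_of_mem _ hr)
    · obtain ⟨a, ha, hmem⟩ := hImax r hr
      have h2 := Submodule.smul_mem (Submodule.span ℝ (M '' I)) a⁻¹ hmem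
      rwa [smul_smul, inv_mul_cancel₀ ha, one_smul] at h2
  have hVk : Module.finrank ℝ (Submodule.span ℝ (Set.range M)) = k := by
    exact (Matrix.rank_eq_finrank_span_row M).symm.trans hk
  have hcardI : Fintype.card ↥I = k := by
    have h1 := finrank_span_eq_card hI
    beta_reduce at h1
    rw [show (Set.range fun x : I => M ↑x) = M '' I from (Set.image_eq_range _ _).symm, hspan, hVk] at h1
    exact h1.symm
  have hmeet : ∀ i : Fin m, Sum.inl i ∈ I ∨ Sum.inr i ∈ I := by
    intro i
    by_contra hcon
    push_neg at hcon
    have hsub : I ⊆ {r : Fin m ⊕ Fin m | r ≠ Sum.inl i ∧ r ≠ Sum.inr i} := by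
      intro r hr
      exact ⟨fun h => hcon.1 (h ▸ hr), fun h => hcon.2 (h ▸ hr)⟩
    have hdel : (M.submatrix
        (fun r : {r : Fin m ⊕ Fin m // r ≠ Sum.inl i ∧ r ≠ Sum.inr i} =>
          (r : Fin m ⊕ Fin m)) id).rank = k := by
      rw [Matrix.rank_eq_finrank_span_row, Matrix.row]
      have hr1 : Set.range (M.submatrix
          (fun r : {r : Fin m ⊕ Fin m // r ≠ Sum.inl i ∧ r ≠ Sum.inr i} =>
            (r : Fin m ⊕ Fin m)) id) = M '' {r : Fin m ⊕ Fin m | r ≠ Sum.inl i ∧ r ≠ Sum.inr i} := by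
        ext v
        constructor
        · rintro ⟨x, rfl⟩
          exact ⟨x.val, x.2, rfl⟩
        · rintro ⟨x, hx, rfl⟩
          exact ⟨⟨x, hx⟩, rfl⟩
      rw [hr1]
      have hle : Submodule.span ℝ (M '' {r : Fin m ⊕ Fin m | r ≠ Sum.inl i ∧ r ≠ Sum.inr i})
          = Submodule.span ℝ (Set.range M) := by
        refine le_antisymm (Submodule.span_mono (Set.image_subset_range _ _)) ?_
        rw [← hspan]
        exact Submodule.span_mono (Set.image_mono hsub)
      rw [hle, hVk]
    have hPi := hP i
    rw [hdel, hk] at hPi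
    omega
  -- counting
  set S2 : Finset (Fin m) :=
    Finset.univ.filter (fun i => Sum.inl i ∈ I ∧ Sum.inr i ∈ I) with hS2def
  have hmB : ∀ i : Fin m, (if Sum.inl i ∈ I then (1:ℕ) else 0) + (if Sum.inr i ∈ I then 1 else 0)
      = 1 + (if Sum.inl i ∈ I ∧ Sum.inr i ∈ I then 1 else 0) := by
    intro i
    rcases hmeet i with h | h <;> by_cases h2 : Sum.inl i ∈ I <;>
      by_cases h3 : Sum.inr i ∈ I <;> simp_all
  have hkmt : k = m + S2.card := by
    have h0 : I.toFinset = Finset.univ.filter (fun r => r ∈ I) := by ext r; simp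
    have h1 : I.toFinset.card = ∑ r : Fin m ⊕ Fin m, if r ∈ I then 1 else 0 := by
      rw [h0, Finset.card_filter]
    rw [Fintype.sum_sum_type] at h1
    have h2 : I.toFinset.card
        = ∑ i : Fin m, ((if Sum.inl i ∈ I then (1:ℕ) else 0) + (if Sum.inr i ∈ I then 1 else 0)) := by
      rw [h1, Finset.sum_add_distrib]
    have h3 : (∑ i : Fin m, ((if Sum.inl i ∈ I then (1:ℕ) else 0) + (if Sum.inr i ∈ I then 1 else 0)))
        = ∑ i : Fin m, ((1:ℕ) + if Sum.inl i ∈ I ∧ Sum.inr i ∈ I then 1 else 0) :=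
      Finset.sum_congr rfl (fun i _ => hmB i)
    have h4 : (∑ i : Fin m, ((1:ℕ) + if Sum.inl i ∈ I ∧ Sum.inr i ∈ I then 1 else 0))
        = m + S2.card := by
      rw [Finset.sum_add_distrib, Finset.sum_const, Finset.card_univ, Fintype.card_fin,
        smul_eq_mul, mul_one, hS2def, Finset.card_filter]
    have h5 : I.toFinset.card = k := by rw [Set.toFinset_card]; exact hcardI
    rw [← h5, h2, h3, h4]
  have htm : S2.card ≤ m := le_trans (Finset.card_le_univ S2) (by simp)
  set T : Finset (Fin m) := Finset.univ.filter (fun j : Fin m => (j : ℕ) < S2.card) with hTdef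
  have hTcard : T.card = S2.card := by
    rw [hTdef, ← Fintype.card_subtype]
    rw [Fintype.card_congr (Fin.castLEOrderIso htm).toEquiv.symm, Fintype.card_fin]
  -- the pair permutation
  let eTS : {x : Fin m // x ∈ T} ≃ {x : Fin m // x ∈ S2} :=
    Fintype.equivOfCardEq (by rw [Fintype.card_coe, Fintype.card_coe, hTcard])
  let eC : {x : Fin m // ¬ x ∈ T} ≃ {x : Fin m // ¬ x ∈ S2} :=
    Fintype.equivOfCardEq (by
      rw [Fintype.card_subtype_compl, Fintype.card_subtype_compl,
        Fintype.card_coe, Fintype.card_coe, hTcard])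
  let ρ : Equiv.Perm (Fin m) := Equiv.subtypeCongr eTS eC
  have hρT : ∀ j : Fin m, j ∈ T → ρ j ∈ S2 := by
    intro j hj
    have h : ρ j = ((eTS ⟨j, hj⟩ : {x : Fin m // x ∈ S2}) : Fin m) := by
      simp [ρ, Equiv.subtypeCongr, hj]
    rw [h]
    exact (eTS ⟨j, hj⟩).2
  -- the pair flips
  set F : Finset (Fin m) := Finset.univ.filter (fun a : Fin m => Sum.inl a ∉ I) with hFdef
  set σ : Equiv.Perm (Fin m ⊕ Fin m) := pairFlip F * Equiv.sumCongr ρ ρ with hσdef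
  have hσinl : ∀ i : Fin m, σ (Sum.inl i)
      = if ρ i ∈ F then Sum.inr (ρ i) else Sum.inl (ρ i) := by
    intro i; simp [hσdef, Equiv.Perm.mul_apply]
  have hσinr : ∀ i : Fin m, σ (Sum.inr i)
      = if ρ i ∈ F then Sum.inl (ρ i) else Sum.inr (ρ i) := by
    intro i; simp [hσdef, Equiv.Perm.mul_apply]
  have hσpairs : ∀ i : Fin m,
      (σ (Sum.inl i) = Sum.inl (ρ i) ∧ σ (Sum.inr i) = Sum.inr (ρ i)) ∨
      (σ (Sum.inl i) = Sum.inr (ρ i) ∧ σ (Sum.inr i) = Sum.inl (ρ i)) := by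
    intro i
    by_cases h : ρ i ∈ F
    · right; rw [hσinl i, hσinr i]; simp [h]
    · left; rw [hσinl i, hσinr i]; simp [h]
  have hmemσ : σ ∈ Subgroup.closure (AllowedSwaps m) :=
    mul_mem (pairFlip_mem F) (sumCongr_mem ρ)
  -- the first k rows land in I
  have hginI : ∀ r : {r : Fin (m + m) // (r : ℕ) < k},
      σ (finSumFinEquiv.symm r.val) ∈ I := by
    rintro ⟨r, hr⟩
    rcases hsplit : finSumFinEquiv.symm r with j | j
    · rw [hσinl j]
      by_cases hF : ρ j ∈ F
      · simp only [hF, if_true]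
        have h1 : Sum.inl (ρ j) ∉ I := by
          have := hF
          rw [hFdef, Finset.mem_filter] at this
          exact this.2
        rcases hmeet (ρ j) with h | h
        · exact absurd h h1
        · exact h
      · simp only [hF, if_false]
        have h1 : ¬ (Sum.inl (ρ j) ∉ I) := by
          intro hcon
          exact hF (by rw [hFdef, Finset.mem_filter]; exact ⟨Finset.mem_univ _, hcon⟩)
        exact not_not.mp h1
    · have h0 : r = finSumFinEquiv (Sum.inr j) := by rw [← hsplit, Equiv.apply_symm_apply]
      have hrv : (r : ℕ) = m + (j : ℕ) := by rw [h0]; simp [add_comm]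
      have hjt : (j : ℕ) < S2.card := by omega
      have hjT : j ∈ T := by rw [hTdef, Finset.mem_filter]; exact ⟨Finset.mem_univ _, hjt⟩
      have hS2j : ρ j ∈ S2 := hρT j hjT
      have hboth : Sum.inl (ρ j) ∈ I ∧ Sum.inr (ρ j) ∈ I := by
        rw [hS2def, Finset.mem_filter] at hS2j
        exact hS2j.2
      rw [hσinr j]
      by_cases hF : ρ j ∈ F <;> simp [hF, hboth.1, hboth.2]
  let g : {r : Fin (m + m) // (r : ℕ) < k} → ↥I :=
    fun r => ⟨σ (finSumFinEquiv.symm r.val), hginI r⟩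
  have hginj : Function.Injective g := by
    intro r s h
    have h1 : σ (finSumFinEquiv.symm r.val) = σ (finSumFinEquiv.symm s.val) :=
      congrArg Subtype.val h
    have h2 := finSumFinEquiv.symm.injective (σ.injective h1)
    exact Subtype.ext h2
  exact ⟨σ, hmemσ, hasPropertyP_submatrix M σ ρ hσpairs hP, hI.comp g hginj⟩
end
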